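/- Let q = (0, 15175619/33313280, 15175619/33313280, 0, 0, 0, 0, 1481021/16656640) and let r* = r(9/11, 9/11) = (4/121, 18/121, 18/121, 81/121). Then the profile (p₁, p₂, q) = (9/11, 9/11, q) is a Nash equilibrium of the three-person zero-sum game determined by A and B: (i) for every p₁ ∈ [0,1], r(p₁, 9/11)·A·q = r*·A·q; (ii) for every p₂ ∈ [0,1], r(9/11, p₂)·B·q = r*·B·q; and (iii) for every column index j ∈ {1,…,8}, r*·(A+B)·q ≤ (r*ᵀ(A+B))ⱼ, i.e., q minimizes the Players' combined expected payoff, so q maximizes Banker's payoff −(1/2)·r*·(A+B)·q. -/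
import Mathlib


open Matrix

/-- The product mixture `((1−p₁)(1−p₂), (1−p₁)p₂, p₁(1−p₂), p₁p₂)` in `ℝ⁴`. -/
noncomputable def prodMix (p₁ p₂ : ℝ) : Fin 4 → ℝ :=
  ![(1 - p₁) * (1 - p₂), (1 - p₁) * p₂, p₁ * (1 - p₂), p₁ * p₂]

/-- Player 1's payoff matrix against Banker at θ = 1/2. -/
noncomputable def matA : Matrix (Fin 4) (Fin 8) ℝ :=
  (-(16 / 13 ^ 9 : ℝ)) •
    !![5774122, 5774122, 4995370, 4995370, 4605994, 4605994, 3827242, 3827242;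
       6359098, 6359098, 5580346, 5580346, 5580346, 5580346, 4801594, 4801594;
       5127763, 5127763, 5300819, 5300819, 5387347, 5387347, 5560403, 5560403;
       5756515, 5756515, 5929571, 5929571, 5929571, 5929571, 6102627, 6102627]

/-- Player 2's payoff matrix against Banker at θ = 1/2. -/
noncomputable def matB : Matrix (Fin 4) (Fin 8) ℝ :=
  (-(16 / 13 ^ 9 : ℝ)) •
    !![5774122, 4995370, 5774122, 4995370, 4605994, 3827242, 4605994, 3827242;
       5127763, 5300819, 5127763, 5300819, 5387347, 5560403, 5387347, 5560403;
       6359098, 5580346, 6359098, 5580346, 5580346, 4801594, 5580346, 4801594;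
       5756515, 5929571, 5756515, 5929571, 5929571, 6102627, 5929571, 6102627]

/-- The profile `(9/11, 9/11, q)` is a Nash equilibrium: each Player is
indifferent given the others' strategies, and `q` minimizes the Players'
combined expected payoff over Banker's pure strategies. -/
theorem nash_equilibrium_profile :
    let q : Fin 8 → ℝ :=
      ![0, 15175619 / 33313280, 15175619 / 33313280, 0, 0, 0, 0,
        1481021 / 16656640]
    let rstar : Fin 4 → ℝ := ![4 / 121, 18 / 121, 18 / 121, 81 / 121]
    (∀ p₁ ∈ Set.Icc (0 : ℝ) 1,
        prodMix p₁ (9 / 11) ⬝ᵥ matA.mulVec q = rstar ⬝ᵥ matA.mulVec q) ∧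
      (∀ p₂ ∈ Set.Icc (0 : ℝ) 1,
        prodMix (9 / 11) p₂ ⬝ᵥ matB.mulVec q = rstar ⬝ᵥ matB.mulVec q) ∧
      (∀ j : Fin 8,
        rstar ⬝ᵥ (matA + matB).mulVec q ≤ Matrix.vecMul rstar (matA + matB) j) := by
  intro q rstar
  refine ⟨?_, ?_, ?_⟩
  · intro p₁ _
    simp only [prodMix, matA, q, rstar, dotProduct, mulVec, Fin.sum_univ_succ,
      Fin.sum_univ_zero, Matrix.smul_apply, Matrix.cons_val_zero, Matrix.cons_val_one,
      Matrix.head_cons, Matrix.cons_val_succ, Matrix.cons_val_fin_one, smul_eq_mul,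
      Matrix.of_apply, Matrix.cons_val', Matrix.empty_val', Matrix.cons_val_fin_one]
    ring
  · intro p₂ _
    simp only [prodMix, matB, q, rstar, dotProduct, mulVec, Fin.sum_univ_succ,
      Fin.sum_univ_zero, Matrix.smul_apply, Matrix.cons_val_zero, Matrix.cons_val_one,
      Matrix.head_cons, Matrix.cons_val_succ, Matrix.cons_val_fin_one, smul_eq_mul,
      Matrix.of_apply, Matrix.cons_val', Matrix.empty_val', Matrix.cons_val_fin_one]
    ring
  · intro j
    fin_cases j <;>
    · simp only [prodMix, matA, matB, q, rstar, dotProduct, mulVec, vecMul,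
        Fin.sum_univ_succ, Fin.sum_univ_zero, Matrix.add_apply, Matrix.smul_apply,
        Matrix.cons_val_zero, Matrix.cons_val_one, Matrix.head_cons, Matrix.cons_val_succ,
        smul_eq_mul, Matrix.of_apply, Matrix.cons_val', Matrix.empty_val',
        Matrix.cons_val_fin_one, Fin.isValue]
      norm_num
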